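/- (Sharpness of the Bohr radius 1/3.) For every q₀ ∈ ℍ with 1/3 < ‖q₀‖ < 1 there exists a sequence b : ℕ → ℍ such that: (i) the family (fun n => ‖b n‖) is summable; (ii) for every q ∈ ℍ with ‖q‖ ≤ 1 one has ‖∑' n, qⁿ · b n‖ < 1; and (iii) ∑' n, ‖q₀ⁿ · b n‖ > 1. -/

import Mathlib

local notation "ℍ" => Quaternion ℝ

lemma mobius_norm_le (a : ℝ) (ha0 : 0 ≤ a) (ha1 : a ≤ 1) (q : ℍ) (hq : ‖q‖ ≤ 1) :
    ‖(a : ℍ) - q‖ ≤ ‖1 - (a : ℍ) * q‖ := by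
  have h1 : Quaternion.normSq ((a : ℍ) - q) ≤ Quaternion.normSq (1 - (a : ℍ) * q) := by
    have hq2 : Quaternion.normSq q ≤ 1 := by
      rw [Quaternion.normSq_eq_norm_mul_self]
      nlinarith [norm_nonneg q]
    simp only [Quaternion.normSq_def'] at hq2 ⊢
    simp only [Quaternion.re_sub, Quaternion.imI_sub, Quaternion.imJ_sub, Quaternion.imK_sub,
      Quaternion.re_coe, Quaternion.imI_coe, Quaternion.imJ_coe, Quaternion.imK_coe,
      Quaternion.re_one, Quaternion.imI_one, Quaternion.imJ_one, Quaternion.imK_one,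
      Quaternion.re_mul, Quaternion.imI_mul, Quaternion.imJ_mul, Quaternion.imK_mul]
    have key : (0:ℝ) ≤ (1 - a^2) * (1 - (q.re^2 + q.imI^2 + q.imJ^2 + q.imK^2)) :=
      mul_nonneg (by nlinarith) (by linarith)
    nlinarith [key]
  rw [Quaternion.normSq_eq_norm_mul_self, Quaternion.normSq_eq_norm_mul_self] at h1
  nlinarith [norm_nonneg ((a : ℍ) - q), norm_nonneg (1 - (a : ℍ) * q)]

set_option maxHeartbeats 1000000 in
/-- Sharpness of the Bohr radius `1/3`: for every point of the open unit ball of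
norm greater than `1/3` there is a power series satisfying the Bohr hypotheses
whose Bohr sum at that point exceeds `1`. -/
theorem bohr_radius_sharp :
    ∀ q₀ : ℍ, 1 / 3 < ‖q₀‖ → ‖q₀‖ < 1 →
      ∃ b : ℕ → ℍ,
        Summable (fun n => ‖b n‖) ∧
        (∀ q : ℍ, ‖q‖ ≤ 1 → ‖∑' n, q ^ n * b n‖ < 1) ∧
        1 < ∑' n, ‖q₀ ^ n * b n‖ := by
  intro q₀ h3 h1
  obtain ⟨r, hr⟩ : ∃ y : ℝ, y = ‖q₀‖ := ⟨_, rfl⟩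
  rw [← hr] at h3 h1
  have hr0 : 0 < r := by linarith
  obtain ⟨a, ha⟩ : ∃ y : ℝ, y = ((1 - r)/(2*r) + 1)/2 := ⟨_, rfl⟩
  have hx0 : 0 ≤ (1 - r)/(2*r) := div_nonneg (by linarith) (by linarith)
  have hx1 : (1 - r)/(2*r) < 1 := by
    rw [div_lt_one (by linarith)]; linarith
  have ha0 : 0 < a := by rw [ha]; linarith
  have ha1 : a < 1 := by rw [ha]; linarith
  have hkey : 1 < r * (1 + 2*a) := by
    have : (1 - r)/(2*r) < a := by rw [ha]; linarith
    rw [div_lt_iff₀ (by linarith)] at this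
    nlinarith
  have har : a * r < 1 := by nlinarith
  have har0 : 0 < 1 - a * r := by linarith
  obtain ⟨S, hS⟩ : ∃ y : ℝ, y = a + (1 - a^2) * r / (1 - a*r) := ⟨_, rfl⟩
  have hS1 : 1 < S := by
    have hd : (1 - a) < (1 - a^2) * r / (1 - a*r) := by
      rw [lt_div_iff₀ har0]; nlinarith
    rw [hS]; linarith
  have hS0 : 0 < S := by linarith
  obtain ⟨t, ht⟩ : ∃ y : ℝ, y = (1/S + 1)/2 := ⟨_, rfl⟩
  have hSlt : 1/S < 1 := by rw [div_lt_one hS0]; exact hS1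
  have ht0 : 0 < t := by
    have : 0 < 1/S := by positivity
    rw [ht]; linarith
  have ht1 : t < 1 := by rw [ht]; linarith
  have htS : 1 < t * S := by
    have h' : 1/S < t := by rw [ht]; linarith
    calc 1 = 1/S * S := by field_simp
    _ < t * S := by exact mul_lt_mul_of_pos_right h' hS0
  -- the coefficient sequence
  obtain ⟨b, hb⟩ : ∃ b : ℕ → ℍ, b = fun n => match n with
    | 0 => ((t*a : ℝ) : ℍ)
    | (n+1) => -(((t*(1-a^2)*a^n : ℝ)) : ℍ) := ⟨_, rfl⟩
  have hb0 : b 0 = ((t*a : ℝ) : ℍ) := by rw [hb]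
  have hbs : ∀ n : ℕ, b (n+1) = -(((t*(1-a^2)*a^n : ℝ)) : ℍ) := fun n => by rw [hb]
  have hnb0 : ‖b 0‖ = t*a := by
    rw [hb0, Quaternion.norm_coe, Real.norm_eq_abs, abs_of_nonneg (by positivity)]
  have hnbs : ∀ n : ℕ, ‖b (n+1)‖ = t*(1-a^2)*a^n := by
    intro n
    rw [hbs, norm_neg, Quaternion.norm_coe, Real.norm_eq_abs, abs_of_nonneg]
    have : (0:ℝ) ≤ 1 - a^2 := by nlinarith
    positivity
  -- summability of norms
  have hsum : Summable (fun n => ‖b n‖) := by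
    rw [← summable_nat_add_iff 1]
    simp only [hnbs]
    exact (summable_geometric_of_lt_one ha0.le ha1).mul_left _
  refine ⟨b, hsum, ?_, ?_⟩
  · -- Bohr-type bound
    intro q hq
    obtain ⟨x, hxdef⟩ : ∃ y : ℍ, y = (a : ℍ) * q := ⟨_, rfl⟩
    have haq : ‖x‖ < 1 := by
      rw [hxdef, norm_mul, Quaternion.norm_coe, Real.norm_eq_abs, abs_of_nonneg ha0.le]
      nlinarith [norm_nonneg q]
    have hx_ne : (1 - x) ≠ 0 := by
      intro h
      have : (1:ℍ) = x := by rwa [sub_eq_zero] at h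
      rw [← this] at haq
      simp at haq
    have hnx0 : ‖1 - x‖ ≠ 0 := norm_ne_zero_iff.mpr hx_ne
    have hgeom : ∑' n : ℕ, x ^ n = (1 - x)⁻¹ := tsum_geometric_of_norm_lt_one haq
    have hsumgeom : Summable (fun n : ℕ => x ^ n) := summable_geometric_of_norm_lt_one haq
    -- summability of the series
    have hsumq : Summable (fun n => q ^ n * b n) := by
      apply Summable.of_norm_bounded hsum
      intro n
      rw [norm_mul, norm_pow]
      calc ‖q‖ ^ n * ‖b n‖ ≤ 1 * ‖b n‖ :=
            mul_le_mul_of_nonneg_right (pow_le_one₀ (norm_nonneg q) hq) (norm_nonneg _)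
      _ = ‖b n‖ := one_mul _
    -- pointwise identity for shifted terms
    have hterm : ∀ n : ℕ, q ^ (n+1) * b (n+1)
        = -(((t*(1-a^2) : ℝ) : ℍ) * (x ^ n * q)) := by
      intro n
      rw [hbs, mul_neg, ← Quaternion.coe_commutes]
      congr 1
      have hxpow : x ^ n = ((a^n : ℝ) : ℍ) * q ^ n := by
        rw [hxdef, (Quaternion.coe_commute a q).mul_pow, ← Quaternion.coe_pow]
      rw [hxpow, Quaternion.coe_mul]
      simp only [pow_succ, mul_assoc]
    -- compute the tsum
    have hcomm_q_inv : Commute q (1 - x)⁻¹ := by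
      have h1 : Commute q x := by
        rw [hxdef]
        exact (Quaternion.coe_commute a q).symm.mul_right (Commute.refl q)
      exact ((Commute.one_right q).sub_right h1).inv_right₀
    have hf : ∑' n, q ^ n * b n
        = ((t*a : ℝ) : ℍ) - ((t*(1-a^2) : ℝ) : ℍ) * (q * (1 - x)⁻¹) := by
      rw [hsumq.tsum_eq_zero_add]
      simp only [hterm, pow_zero, one_mul, hb0]
      rw [tsum_neg, tsum_mul_left, tsum_mul_right, hgeom]
      rw [← hcomm_q_inv.eq, ← sub_eq_add_neg]
    have halg : ((t*a : ℝ) : ℍ) * (1 - x) - ((t*(1-a^2) : ℝ) : ℍ) * q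
        = ((t : ℝ) : ℍ) * ((a : ℝ) - q) := by
      rw [hxdef]
      ext <;>
        simp [Quaternion.re_mul, Quaternion.imI_mul, Quaternion.imJ_mul,
          Quaternion.imK_mul, ← Quaternion.coe_pow, Quaternion.re_one, Quaternion.imI_one,
          Quaternion.imJ_one, Quaternion.imK_one] <;> ring
    have hf2 : ∑' n, q ^ n * b n = ((t : ℝ) : ℍ) * (((a : ℝ) : ℍ) - q) * (1 - x)⁻¹ := by
      rw [hf, ← mul_assoc]
      have h0 : ((t*a : ℝ) : ℍ) = ((t*a : ℝ) : ℍ) * (1 - x) * (1 - x)⁻¹ := by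
        rw [mul_assoc, mul_inv_cancel₀ hx_ne, mul_one]
      rw [h0, ← sub_mul, halg]
    rw [hf2]
    rw [norm_mul, norm_mul, Quaternion.norm_coe, Real.norm_eq_abs, abs_of_nonneg ht0.le,
      norm_inv]
    have hle : ‖((a : ℝ) : ℍ) - q‖ ≤ ‖1 - x‖ := by
      rw [hxdef]; exact mobius_norm_le a ha0.le ha1.le q hq
    calc t * ‖((a : ℝ) : ℍ) - q‖ * ‖1 - x‖⁻¹
        ≤ t * ‖1 - x‖ * ‖1 - x‖⁻¹ := by
          apply mul_le_mul_of_nonneg_right _ (by positivity)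
          exact mul_le_mul_of_nonneg_left hle ht0.le
    _ = t := by rw [mul_assoc, mul_inv_cancel₀ hnx0, mul_one]
    _ < 1 := ht1
  · -- Bohr sum at q₀ exceeds 1
    have hterm : ∀ n : ℕ, ‖q₀ ^ (n+1) * b (n+1)‖ = (t*(1-a^2)*r) * (a*r)^n := by
      intro n
      rw [norm_mul, norm_pow, hnbs, ← hr]
      ring
    have hterm0 : ‖q₀ ^ 0 * b 0‖ = t*a := by rw [pow_zero, one_mul, hnb0]
    have hsum2 : Summable (fun n => ‖q₀ ^ n * b n‖) := by
      rw [← summable_nat_add_iff 1]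
      simp only [hterm]
      exact (summable_geometric_of_lt_one (mul_nonneg ha0.le hr0.le) har).mul_left _
    rw [hsum2.tsum_eq_zero_add]
    simp only [hterm, hterm0]
    rw [tsum_mul_left, tsum_geometric_of_lt_one (mul_nonneg ha0.le hr0.le) har]
    have key : t*a + t*(1-a^2)*r * (1 - a*r)⁻¹ = t * S := by
      rw [hS, mul_add, div_eq_mul_inv]
      ring
    rw [key]
    exact htS
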